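/- Let N ≥ 1, let I = {1, …, N} with a neighbor map N(·) assigning to each i ∈ I a finite set N(i) ⊆ I with i ∉ N(i), and write n_i = |N(i)|. Suppose for each i there are K∞ functions α_i, σ_{d,i}, θ_i and constants λ_i > 0, c_{i,α} > 0, c_{i,σ} > 0 such that for all r ≥ 0: (1) α_i( r / max(1, n_i) ) ≥ c_{i,α}·θ_i(r), and (2) if N(i) ≠ ∅ then σ_{d,i}(r) ≤ c_{i,σ}·θ_i(r). Let A ∈ ℝ^{N×N} be the diagonal matrix with A(i,i) = λ_i·c_{i,α}, and let B ∈ ℝ^{N×N} have B(i,j) = c_{j,σ} if j ∈ N(i) and B(i,j) = 0 otherwise. If there exists s ∈ ℝ^N with s_i > 0 for all i and (−A + B)s < 0 componentwise, then there exist ε'_1, …, ε'_N > 0 such that for every i ∈ I, λ_i · α_i( ε'_i / max(1, n_i) ) > Σ_{j∈N(i)} σ_{d,j}(ε'_j). -/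

import Mathlib

/-- A continuous function `ℝ_{≥0} → ℝ_{≥0}` of class `K∞`: strictly increasing, vanishing at `0`,
and tending to `∞` at `∞` (modeled on the nonnegative half-line of `ℝ`). -/
def IsKInf (g : ℝ → ℝ) : Prop :=
  ContinuousOn g (Set.Ici 0) ∧ StrictMonoOn g (Set.Ici 0) ∧ g 0 = 0 ∧
    Filter.Tendsto g Filter.atTop Filter.atTop

lemma IsKInf.surj {g : ℝ → ℝ} (hg : IsKInf g) {y : ℝ} (hy : 0 < y) :
    ∃ x, 0 < x ∧ g x = y := by
  obtain ⟨hc, hm, h0, ht⟩ := hg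
  obtain ⟨a, ha⟩ := (Filter.tendsto_atTop.mp ht y).exists_forall_of_atTop
  set M := max a 0 with hM
  have hM0 : (0:ℝ) ≤ M := le_max_right a 0
  have hgM : y ≤ g M := ha M (le_max_left a 0)
  have hsub : Set.Icc (0:ℝ) M ⊆ Set.Ici 0 := fun x hx => hx.1
  have := intermediate_value_Icc hM0 (hc.mono hsub)
  have hmem : y ∈ Set.Icc (g 0) (g M) := ⟨by rw [h0]; exact hy.le, hgM⟩
  obtain ⟨x, hx, hgx⟩ := this hmem
  refine ⟨x, ?_, hgx⟩
  rcases lt_or_eq_of_le hx.1 with h | h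
  · exact h
  · exfalso; rw [← h, h0] at hgx; exact hy.ne hgx

/-- **Small-gain condition for simultaneous abstraction.** Under the comparison conditions
`α_i(r/max(1,n_i)) ≥ c_{i,α}·θ_i(r)` and (for components with neighbors)
`σ_{d,i}(r) ≤ c_{i,σ}·θ_i(r)`, if there exists a positive vector `s` with `(−A + B)s < 0`
componentwise — where `A = diag(λ_i·c_{i,α})` and `B(i,j) = c_{j,σ}` if `j ∈ N(i)`, else `0` —
then there exist `ε'_i > 0` with
`λ_i·α_i(ε'_i/max(1,n_i)) > Σ_{j∈N(i)} σ_{d,j}(ε'_j)` for every `i`. -/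
theorem small_gain_quantization_exists (N : ℕ) (hN : 1 ≤ N)
    (Nbr : Fin N → Finset (Fin N)) (hirr : ∀ i, i ∉ Nbr i)
    (alpha sigd theta : Fin N → ℝ → ℝ)
    (halpha : ∀ i, IsKInf (alpha i)) (hsigd : ∀ i, IsKInf (sigd i))
    (htheta : ∀ i, IsKInf (theta i))
    (lam calpha csig : Fin N → ℝ)
    (hlam : ∀ i, 0 < lam i) (hcalpha : ∀ i, 0 < calpha i) (hcsig : ∀ i, 0 < csig i)
    (h1 : ∀ i, ∀ r : ℝ, 0 ≤ r →
      calpha i * theta i r ≤ alpha i (r / max 1 ((Nbr i).card : ℝ)))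
    (h2 : ∀ i, (Nbr i).Nonempty → ∀ r : ℝ, 0 ≤ r → sigd i r ≤ csig i * theta i r)
    (s : Fin N → ℝ) (hs : ∀ i, 0 < s i)
    (hsg : ∀ i, ((-(Matrix.diagonal fun i => lam i * calpha i) +
        Matrix.of fun i j => if j ∈ Nbr i then csig j else 0).mulVec s) i < 0) :
    ∃ ε' : Fin N → ℝ, (∀ i, 0 < ε' i) ∧
      ∀ i, (∑ j ∈ Nbr i, sigd j (ε' j)) <
        lam i * alpha i (ε' i / max 1 ((Nbr i).card : ℝ)) := by
  haveI : NeZero N := ⟨by omega⟩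
  -- Rewrite the small-gain hypothesis into sum form
  have hsg' : ∀ i, (∑ j ∈ Nbr i, csig j * s j) < lam i * calpha i * s i := by
    intro i
    have h := hsg i
    have heq : ((-(Matrix.diagonal fun i => lam i * calpha i) +
        Matrix.of fun i j => if j ∈ Nbr i then csig j else 0).mulVec s) i
        = -(lam i * calpha i * s i) + ∑ j ∈ Nbr i, csig j * s j := by
      simp [Matrix.mulVec, dotProduct, Matrix.add_apply, Matrix.neg_apply,
        Matrix.diagonal_apply, Matrix.of_apply, add_mul, Finset.sum_add_distrib,
        Finset.sum_ite_eq', ite_mul, mul_assoc]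
      try rw [← Finset.sum_filter]
      try simp [Finset.filter_mem_eq_inter]
    rw [heq] at h
    linarith
  -- the slack
  set G : Fin N → ℝ := fun i => lam i * calpha i * s i - ∑ j ∈ Nbr i, csig j * s j with hG
  have hGpos : ∀ i, 0 < G i := fun i => by simp [hG]; linarith [hsg' i]
  obtain ⟨m, hmmem, hmmin⟩ := Finset.exists_min_image Finset.univ G Finset.univ_nonempty
  set δ : ℝ := G m / (N + 1) with hδ
  have hδpos : 0 < δ := div_pos (hGpos m) (by positivity)
  have hNδ : ∀ i, (N : ℝ) * δ < G i := by
    intro i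
    have h1' : G m ≤ G i := hmmin i (Finset.mem_univ i)
    have : (N : ℝ) * δ < G m := by
      rw [hδ]
      have hNlt : (N : ℝ) / (N + 1) < 1 := by
        rw [div_lt_one (by positivity)]; linarith
      calc (N:ℝ) * (G m / (N+1)) = (N:ℝ)/(N+1) * G m := by ring
        _ < 1 * G m := by exact mul_lt_mul_of_pos_right hNlt (hGpos m)
        _ = G m := one_mul _
    linarith
  -- choose ε'
  have hch : ∀ j : Fin N, ∃ x, 0 < x ∧
      (if (Nbr j).Nonempty then theta j x = s j else sigd j x = δ) := by
    intro j
    by_cases hj : (Nbr j).Nonempty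
    · obtain ⟨x, hx, hgx⟩ := (htheta j).surj (hs j)
      exact ⟨x, hx, by simp [hj, hgx]⟩
    · obtain ⟨x, hx, hgx⟩ := (hsigd j).surj hδpos
      exact ⟨x, hx, by simp [hj, hgx]⟩
  choose ε' hεpos hεprop using hch
  refine ⟨ε', hεpos, fun i => ?_⟩
  -- bound each summand
  have hterm : ∀ j ∈ Nbr i, sigd j (ε' j) ≤ csig j * s j + δ := by
    intro j _
    have hp := hεprop j
    by_cases hj : (Nbr j).Nonempty
    · rw [if_pos hj] at hp
      have := h2 j hj (ε' j) (hεpos j).le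
      rw [hp] at this
      linarith
    · rw [if_neg hj] at hp
      have := mul_pos (hcsig j) (hs j)
      linarith
  have hsum : (∑ j ∈ Nbr i, sigd j (ε' j)) ≤
      (∑ j ∈ Nbr i, csig j * s j) + (Nbr i).card * δ := by
    calc (∑ j ∈ Nbr i, sigd j (ε' j)) ≤ ∑ j ∈ Nbr i, (csig j * s j + δ) :=
          Finset.sum_le_sum hterm
      _ = (∑ j ∈ Nbr i, csig j * s j) + (Nbr i).card * δ := by
          rw [Finset.sum_add_distrib, Finset.sum_const, nsmul_eq_mul]
  have hcard : ((Nbr i).card : ℝ) ≤ (N : ℝ) := by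
    exact_mod_cast Finset.card_le_card (Finset.subset_univ (Nbr i)) |>.trans_eq
      (by simp)
  have hsum2 : (∑ j ∈ Nbr i, sigd j (ε' j)) < lam i * calpha i * s i := by
    have : ((Nbr i).card : ℝ) * δ ≤ (N : ℝ) * δ :=
      mul_le_mul_of_nonneg_right hcard hδpos.le
    have h3 := hNδ i
    simp only [hG] at h3
    linarith
  -- bound the right side from below
  by_cases hi : (Nbr i).Nonempty
  · have hp := hεprop i
    rw [if_pos hi] at hp
    have hlow := h1 i (ε' i) (hεpos i).le
    rw [hp] at hlow
    have : lam i * (calpha i * s i) ≤ lam i * alpha i (ε' i / max 1 ((Nbr i).card : ℝ)) :=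
      mul_le_mul_of_nonneg_left hlow (hlam i).le
    linarith
  · rw [Finset.not_nonempty_iff_eq_empty] at hi
    rw [hi]
    simp only [Finset.sum_empty, Finset.card_empty, Nat.cast_zero]
    have hmax : max (1:ℝ) 0 = 1 := by norm_num
    rw [hmax, div_one]
    obtain ⟨hc, hm, h0, ht⟩ := halpha i
    have : alpha i 0 < alpha i (ε' i) := hm (Set.mem_Ici.mpr (le_refl 0)) (Set.mem_Ici.mpr (hεpos i).le) (hεpos i)
    rw [h0] at this
    exact mul_pos (hlam i) this
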